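/- arXiv:1712.02158 — 4 statements merged into one kernel-verified Lean document; each statement's English description precedes it below -/
import Mathlib

section
/- Let A_q ∈ ℝ^{n_q×n_q}, K_{q1,q2} ∈ ℝ^{n_{q2}×n_{q1}} (q1 ≠ q2), symmetric positive definite Q_q ∈ ℝ^{n_q×n_q}, and constants M, μ > 0 satisfy e^{−Mμ} K_{q1,q2}ᵀ Q_{q2} K_{q1,q2} ≺ Q_{q1} for all q1 ≠ q2 and A_qᵀ Q_q + Q_q A_q + M Q_q ≺ 0 for all q. Let S_q be invertible matrices such that Λ_q := (S_q^{−1})ᵀ Q_q S_q^{−1} is diagonal, and define the transformed matrices Ā_q = S_q A_q S_q^{−1} and K̄_{q1,q2} = S_{q2} K_{q1,q2} S_{q1}^{−1}. Fix truncation orders r_q ≤ n_q, write Λ_q = diag(Λ̂_q, Λ̌_q) with Λ̂_q the leading r_q×r_q block, and let Â_q be the leading r_q×r_q block of Ā_q and K̂_{q1,q2} the leading r_{q2}×r_{q1} block of K̄_{q1,q2}. Then e^{−Mμ} K̂_{q1,q2}ᵀ Λ̂_{q2} K̂_{q1,q2} ≺ Λ̂_{q1} for all q1 ≠ q2, and Â_qᵀ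 Λ̂_q + Λ̂_q Â_q + M Λ̂_q ≺ 0 for all q. -/
open Matrix

section Aux

variable {m n : Type*} [Fintype m] [Fintype n] [DecidableEq n] [DecidableEq m]

/-- Congruence of a positive definite matrix by a matrix with injective `mulVec`. -/
lemma posDef_conj {A : Matrix n n ℝ} (hA : A.PosDef)
    (B : Matrix n m ℝ) (hB : Function.Injective B.mulVec) :
    (Bᵀ * A * B).PosDef := by
  rw [← conjTranspose_eq_transpose_of_trivial, posDef_iff_dotProduct_mulVec]
  constructor
  · exact Matrix.isHermitian_conjTranspose_mul_mul B hA.1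
  · intro x hx
    have hBx : B *ᵥ x ≠ 0 := fun h => hx (hB (h.trans (B.mulVec_zero).symm))
    simpa only [star_mulVec, dotProduct_mulVec, vecMul_vecMul] using hA.dotProduct_mulVec_pos hBx

lemma mulVec_one_submatrix (e : m → n) (he : Function.Injective e) (x : m → ℝ) (k : m) :
    (((1 : Matrix n n ℝ).submatrix id e) *ᵥ x) (e k) = x k := by
  simp only [Matrix.mulVec, dotProduct, submatrix_apply, id_eq, Matrix.one_apply,
    he.eq_iff, ite_mul, one_mul, zero_mul]
  simp

/-- A principal submatrix (along an injective map) of a positive definite matrix is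
positive definite. -/
lemma posDef_submatrix {M : Matrix n n ℝ} (hM : M.PosDef) (e : m → n)
    (he : Function.Injective e) : (M.submatrix e e).PosDef := by
  have hrw : M.submatrix e e =
      ((1 : Matrix n n ℝ).submatrix id e)ᵀ * M * ((1 : Matrix n n ℝ).submatrix id e) := by
    rw [(by simp : M = 1 * M * 1), submatrix_mul (he₂ := Function.bijective_id),
      submatrix_mul (he₂ := Function.bijective_id), submatrix_id_id]
    simp [transpose_submatrix]
  rw [hrw]
  refine posDef_conj hM _ ?_
  intro x y hxy
  funext k
  have := congrFun hxy (e k)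
  rwa [mulVec_one_submatrix e he, mulVec_one_submatrix e he] at this

lemma posSemidef_smul {M : Matrix n n ℝ} (hM : M.PosSemidef) {c : ℝ} (hc : 0 ≤ c) :
    (c • M).PosSemidef := by
  rw [posSemidef_iff_dotProduct_mulVec]
  constructor
  · show (c • M)ᴴ = c • M
    rw [conjTranspose_smul, star_trivial, hM.1.eq]
  · intro x
    have := hM.dotProduct_mulVec_nonneg x
    simp only [smul_mulVec, dotProduct_smul, smul_eq_mul]
    positivity

/-- `(M * Λ).submatrix f f = M.submatrix f f * Λ.submatrix f f` for diagonal `Λ`,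
injective `f`. -/
lemma submatrix_mul_isDiag {M Λ : Matrix n n ℝ} (hΛ : Λ.IsDiag)
    (f : m → n) (hf : Function.Injective f) :
    (M * Λ).submatrix f f = M.submatrix f f * Λ.submatrix f f := by
  ext i j
  simp only [submatrix_apply, Matrix.mul_apply]
  rw [Finset.sum_eq_single (f j), Finset.sum_eq_single j]
  · intro b _ hb
    rw [hΛ (fun h => hb (hf h)), mul_zero]
  · simp
  · intro b _ hb
    rw [hΛ hb, mul_zero]
  · simp

lemma submatrix_isDiag_mul {M Λ : Matrix n n ℝ} (hΛ : Λ.IsDiag)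
    (f : m → n) (hf : Function.Injective f) :
    (Λ * M).submatrix f f = Λ.submatrix f f * M.submatrix f f := by
  ext i j
  simp only [submatrix_apply, Matrix.mul_apply]
  rw [Finset.sum_eq_single (f i), Finset.sum_eq_single i]
  · intro b _ hb
    rw [hΛ (fun h => hb (hf h).symm), zero_mul]
  · simp
  · intro b _ hb
    rw [hΛ (Ne.symm hb), zero_mul]
  · simp

lemma quadform_isDiag {Λ : Matrix n n ℝ} (hΛ : Λ.IsDiag) (y : n → ℝ) :
    star y ⬝ᵥ (Λ *ᵥ y) = ∑ k, Λ k k * (y k) ^ 2 := by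
  simp only [dotProduct, Matrix.mulVec, Pi.star_apply, star_trivial]
  refine Finset.sum_congr rfl fun k _ => ?_
  rw [Finset.sum_eq_single k (fun b _ hb => by rw [hΛ (Ne.symm hb), zero_mul]) (by simp)]
  ring

lemma quad_conj {p : Type*} [Fintype p] (ΛΛ : Matrix p p ℝ) (C : Matrix p m ℝ) (x : m → ℝ) :
    star x ⬝ᵥ ((Cᵀ * ΛΛ * C) *ᵥ x) = star (C *ᵥ x) ⬝ᵥ (ΛΛ *ᵥ (C *ᵥ x)) := by
  rw [← conjTranspose_eq_transpose_of_trivial]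
  simp only [star_mulVec, dotProduct_mulVec, vecMul_vecMul]

end Aux

section Tail

/-- The "tail" part of a truncated diagonal quadratic form is positive semidefinite. -/
lemma tail_posSemidef {n2 r2 : ℕ} (h : r2 ≤ n2) {m : Type*} [Fintype m]
    {Λ : Matrix (Fin n2) (Fin n2) ℝ} (hΛ : Λ.IsDiag) (hpos : ∀ k, 0 ≤ Λ k k)
    (B : Matrix (Fin n2) m ℝ) :
    (Bᵀ * Λ * B -
      (B.submatrix (Fin.castLE h) id)ᵀ * Λ.submatrix (Fin.castLE h) (Fin.castLE h) *
        (B.submatrix (Fin.castLE h) id)).PosSemidef := by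
  have hΛh : Λ.IsHermitian := by
    ext i j
    rcases eq_or_ne i j with rfl | hij
    · simp
    · rw [conjTranspose_apply, hΛ hij, hΛ (Ne.symm hij), star_zero]
  have hΛ2 : (Λ.submatrix (Fin.castLE h) (Fin.castLE h)).IsDiag := by
    intro i j hij
    exact hΛ (fun hh => hij (Fin.castLE_injective h hh))
  rw [posSemidef_iff_dotProduct_mulVec]
  constructor
  · refine IsHermitian.sub ?_ ?_
    · rw [← conjTranspose_eq_transpose_of_trivial]
      exact Matrix.isHermitian_conjTranspose_mul_mul B hΛh
    · rw [← conjTranspose_eq_transpose_of_trivial]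
      exact Matrix.isHermitian_conjTranspose_mul_mul _ (hΛh.submatrix _)
  · intro x
    classical
    have hCx : ∀ k, ((B.submatrix (Fin.castLE h) id) *ᵥ x) k = (B *ᵥ x) (Fin.castLE h k) := by
      intro k
      simp [Matrix.mulVec, dotProduct, submatrix_apply]
    rw [Matrix.sub_mulVec, dotProduct_sub, quad_conj, quad_conj, quadform_isDiag hΛ,
      quadform_isDiag hΛ2, sub_nonneg]
    have hterm : ∀ k : Fin r2,
        Λ.submatrix (Fin.castLE h) (Fin.castLE h) k k *
            (((B.submatrix (Fin.castLE h) id) *ᵥ x) k) ^ 2 =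
          Λ (Fin.castLE h k) (Fin.castLE h k) * ((B *ᵥ x) (Fin.castLE h k)) ^ 2 := by
      intro k
      rw [hCx, submatrix_apply]
    calc ∑ k : Fin r2, Λ.submatrix (Fin.castLE h) (Fin.castLE h) k k *
          (((B.submatrix (Fin.castLE h) id) *ᵥ x) k) ^ 2
        = ∑ k ∈ Finset.univ.map (Fin.castLEEmb h),
            Λ k k * ((B *ᵥ x) k) ^ 2 := by
          rw [Finset.sum_map]
          exact Finset.sum_congr rfl fun k _ => hterm k
      _ ≤ ∑ k : Fin n2, Λ k k * ((B *ᵥ x) k) ^ 2 := by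
          refine Finset.sum_le_sum_of_subset_of_nonneg (Finset.subset_univ _) ?_
          intro k _ _
          exact mul_nonneg (hpos k) (sq_nonneg _)

end Tail



/-- Corollary 4: suppose positive definite `Q_q` satisfy
`e^{−Mμ} K_{q1,q2}ᵀ Q_{q2} K_{q1,q2} ≺ Q_{q1}` for all `q1 ≠ q2` and
`A_qᵀ Q_q + Q_q A_q + M Q_q ≺ 0` for all `q`.  Let `S_q` be invertible with
`Λ_q := (S_q⁻¹)ᵀ Q_q S_q⁻¹` diagonal; transform `Ā_q = S_q A_q S_q⁻¹`,
`K̄_{q1,q2} = S_{q2} K_{q1,q2} S_{q1}⁻¹`, and keep the leading `r_q` blocks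
(`Â_q`, `K̂_{q1,q2}`, `Λ̂_q`).  Then
`e^{−Mμ} K̂_{q1,q2}ᵀ Λ̂_{q2} K̂_{q1,q2} ≺ Λ̂_{q1}` for all `q1 ≠ q2`, and
`Â_qᵀ Λ̂_q + Λ̂_q Â_q + M Λ̂_q ≺ 0` for all `q`. -/
theorem stmt_13 {D : ℕ} (n : Fin D → ℕ)
    (A : (q : Fin D) → Matrix (Fin (n q)) (Fin (n q)) ℝ)
    (K : (q1 q2 : Fin D) → Matrix (Fin (n q2)) (Fin (n q1)) ℝ)
    (Q : (q : Fin D) → Matrix (Fin (n q)) (Fin (n q)) ℝ)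
    (hQ : ∀ q, (Q q).PosDef)
    (Mc μ : ℝ) (hMc : 0 < Mc) (hμ : 0 < μ)
    (hK : ∀ q1 q2, q1 ≠ q2 →
      (Q q1 - Real.exp (-(Mc * μ)) • ((K q1 q2)ᵀ * Q q2 * K q1 q2)).PosDef)
    (hLyap : ∀ q, (-((A q)ᵀ * Q q + Q q * A q + Mc • Q q)).PosDef)
    (Sq : (q : Fin D) → Matrix (Fin (n q)) (Fin (n q)) ℝ)
    (hSq : ∀ q, IsUnit (Sq q).det)
    (hdiag : ∀ q, (((Sq q)⁻¹)ᵀ * Q q * (Sq q)⁻¹).IsDiag)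
    (r : Fin D → ℕ) (hr : ∀ q, r q ≤ n q) :
    (∀ q1 q2, q1 ≠ q2 →
      (((((Sq q1)⁻¹)ᵀ * Q q1 * (Sq q1)⁻¹).submatrix (Fin.castLE (hr q1)) (Fin.castLE (hr q1))) -
        Real.exp (-(Mc * μ)) •
          (((Sq q2 * K q1 q2 * (Sq q1)⁻¹).submatrix (Fin.castLE (hr q2)) (Fin.castLE (hr q1)))ᵀ *
            ((((Sq q2)⁻¹)ᵀ * Q q2 * (Sq q2)⁻¹).submatrix (Fin.castLE (hr q2)) (Fin.castLE (hr q2))) *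
            ((Sq q2 * K q1 q2 * (Sq q1)⁻¹).submatrix (Fin.castLE (hr q2)) (Fin.castLE (hr q1))))).PosDef) ∧
    (∀ q,
      (-(((Sq q * A q * (Sq q)⁻¹).submatrix (Fin.castLE (hr q)) (Fin.castLE (hr q)))ᵀ *
            ((((Sq q)⁻¹)ᵀ * Q q * (Sq q)⁻¹).submatrix (Fin.castLE (hr q)) (Fin.castLE (hr q))) +
          ((((Sq q)⁻¹)ᵀ * Q q * (Sq q)⁻¹).submatrix (Fin.castLE (hr q)) (Fin.castLE (hr q))) *
            ((Sq q * A q * (Sq q)⁻¹).submatrix (Fin.castLE (hr q)) (Fin.castLE (hr q))) +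
          Mc • ((((Sq q)⁻¹)ᵀ * Q q * (Sq q)⁻¹).submatrix (Fin.castLE (hr q)) (Fin.castLE (hr q))))).PosDef) := by
  
  -- common notation
  have hSinv : ∀ q, Function.Injective ((Sq q)⁻¹).mulVec := by
    intro q
    rw [Matrix.mulVec_injective_iff_isUnit, Matrix.isUnit_iff_isUnit_det]
    exact Matrix.isUnit_nonsing_inv_det _ (hSq q)
  set Λ : (q : Fin D) → Matrix (Fin (n q)) (Fin (n q)) ℝ :=
    fun q => ((Sq q)⁻¹)ᵀ * Q q * (Sq q)⁻¹ with hΛdef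
  have hΛpos : ∀ q, (Λ q).PosDef := fun q => posDef_conj (hQ q) _ (hSinv q)
  have hΛdiag : ∀ q, (Λ q).IsDiag := hdiag
  have hii : ∀ q, (Sq q)⁻¹ * Sq q = 1 := fun q => Matrix.nonsing_inv_mul _ (hSq q)
  have hiiT : ∀ q, (Sq q)ᵀ * ((Sq q)⁻¹)ᵀ = 1 := by
    intro q
    rw [← transpose_mul, hii, transpose_one]
  have hdiagnn : ∀ q k, 0 ≤ (Λ q) k k := by
    intro q k
    have := (hΛpos q).posSemidef.dotProduct_mulVec_nonneg (Pi.single k 1)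
    simpa [dotProduct, Matrix.mulVec, Pi.single_apply, Finset.sum_ite_eq,
      Finset.sum_ite_eq'] using this
  constructor
  · -- Part 1
    intro q1 q2 hq
    set e := Real.exp (-(Mc * μ)) with he
    have hepos : 0 < e := Real.exp_pos _
    set Kb : Matrix (Fin (n q2)) (Fin (n q1)) ℝ := Sq q2 * K q1 q2 * (Sq q1)⁻¹ with hKb
    -- full transformed inequality
    have hfulleq : ((Sq q1)⁻¹)ᵀ * (Q q1 - e • ((K q1 q2)ᵀ * Q q2 * K q1 q2)) * (Sq q1)⁻¹ =
        Λ q1 - e • (Kbᵀ * Λ q2 * Kb) := by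
      have h1 : Kbᵀ * Λ q2 * Kb =
          ((Sq q1)⁻¹)ᵀ * ((K q1 q2)ᵀ * Q q2 * K q1 q2) * (Sq q1)⁻¹ := by
        simp only [hKb, hΛdef, transpose_mul, Matrix.mul_assoc]
        rw [← Matrix.mul_assoc ((Sq q2)ᵀ) (((Sq q2)⁻¹)ᵀ), hiiT q2, Matrix.one_mul,
          ← Matrix.mul_assoc ((Sq q2)⁻¹) (Sq q2), hii q2, Matrix.one_mul]
      rw [Matrix.mul_sub, Matrix.sub_mul, h1]
      congr 1
      rw [Matrix.mul_smul, Matrix.smul_mul]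
    have hfull : (Λ q1 - e • (Kbᵀ * Λ q2 * Kb)).PosDef := by
      rw [← hfulleq]
      exact posDef_conj (hK q1 q2 hq) _ (hSinv q1)
    -- principal submatrix
    have hsub : ((Λ q1 - e • (Kbᵀ * Λ q2 * Kb)).submatrix
        (Fin.castLE (hr q1)) (Fin.castLE (hr q1))).PosDef :=
      posDef_submatrix hfull _ (Fin.castLE_injective _)
    set B : Matrix (Fin (n q2)) (Fin (r q1)) ℝ := Kb.submatrix id (Fin.castLE (hr q1)) with hB
    have hKhat : Kb.submatrix (Fin.castLE (hr q2)) (Fin.castLE (hr q1)) =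
        B.submatrix (Fin.castLE (hr q2)) id := by
      rw [hB, submatrix_submatrix]
      rfl
    have hmid : ((Kbᵀ * Λ q2 * Kb).submatrix (Fin.castLE (hr q1)) (Fin.castLE (hr q1))) =
        Bᵀ * Λ q2 * B := by
      rw [submatrix_mul (e₂ := id) (he₂ := Function.bijective_id),
        submatrix_mul (e₂ := id) (he₂ := Function.bijective_id), submatrix_id_id]
      rw [hB, ← transpose_submatrix]
    have hD : (Bᵀ * Λ q2 * B -
        (B.submatrix (Fin.castLE (hr q2)) id)ᵀ *
          (Λ q2).submatrix (Fin.castLE (hr q2)) (Fin.castLE (hr q2)) *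
          (B.submatrix (Fin.castLE (hr q2)) id)).PosSemidef :=
      tail_posSemidef (hr q2) (hΛdiag q2) (hdiagnn q2) B
    have hgoal : (Λ q1).submatrix (Fin.castLE (hr q1)) (Fin.castLE (hr q1)) -
        e • ((Kb.submatrix (Fin.castLE (hr q2)) (Fin.castLE (hr q1)))ᵀ *
          ((Λ q2).submatrix (Fin.castLE (hr q2)) (Fin.castLE (hr q2))) *
          (Kb.submatrix (Fin.castLE (hr q2)) (Fin.castLE (hr q1)))) =
        ((Λ q1 - e • (Kbᵀ * Λ q2 * Kb)).submatrix
          (Fin.castLE (hr q1)) (Fin.castLE (hr q1))) +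
        e • (Bᵀ * Λ q2 * B -
          (B.submatrix (Fin.castLE (hr q2)) id)ᵀ *
            (Λ q2).submatrix (Fin.castLE (hr q2)) (Fin.castLE (hr q2)) *
            (B.submatrix (Fin.castLE (hr q2)) id)) := by
      have h4 : (Λ q1 - e • (Kbᵀ * Λ q2 * Kb)).submatrix
          (Fin.castLE (hr q1)) (Fin.castLE (hr q1)) =
          (Λ q1).submatrix (Fin.castLE (hr q1)) (Fin.castLE (hr q1)) -
            e • ((Kbᵀ * Λ q2 * Kb).submatrix (Fin.castLE (hr q1)) (Fin.castLE (hr q1))) := by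
        ext i j
        simp
      rw [h4, hmid, hKhat, smul_sub]
      abel
    show ((Λ q1).submatrix (Fin.castLE (hr q1)) (Fin.castLE (hr q1)) -
        e • ((Kb.submatrix (Fin.castLE (hr q2)) (Fin.castLE (hr q1)))ᵀ *
          ((Λ q2).submatrix (Fin.castLE (hr q2)) (Fin.castLE (hr q2))) *
          (Kb.submatrix (Fin.castLE (hr q2)) (Fin.castLE (hr q1))))).PosDef
    rw [hgoal]
    exact hsub.add_posSemidef (posSemidef_smul hD hepos.le)
  · -- Part 2
    intro q
    set Ab : Matrix (Fin (n q)) (Fin (n q)) ℝ := Sq q * A q * (Sq q)⁻¹ with hAb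
    have hfulleq : ((Sq q)⁻¹)ᵀ * (-((A q)ᵀ * Q q + Q q * A q + Mc • Q q)) * (Sq q)⁻¹ =
        -(Abᵀ * Λ q + Λ q * Ab + Mc • Λ q) := by
      have h1 : Abᵀ * Λ q = ((Sq q)⁻¹)ᵀ * ((A q)ᵀ * Q q) * (Sq q)⁻¹ := by
        simp only [hAb, hΛdef, transpose_mul, Matrix.mul_assoc]
        rw [← Matrix.mul_assoc ((Sq q)ᵀ) (((Sq q)⁻¹)ᵀ), hiiT q, Matrix.one_mul]
      have h2 : Λ q * Ab = ((Sq q)⁻¹)ᵀ * (Q q * A q) * (Sq q)⁻¹ := by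
        simp only [hAb, hΛdef, Matrix.mul_assoc]
        rw [← Matrix.mul_assoc ((Sq q)⁻¹) (Sq q), hii q, Matrix.one_mul]
      have h3 : Mc • Λ q = ((Sq q)⁻¹)ᵀ * (Mc • Q q) * (Sq q)⁻¹ := by
        rw [hΛdef, Matrix.mul_smul, Matrix.smul_mul]
      rw [Matrix.mul_neg, Matrix.neg_mul]
      congr 1
      rw [Matrix.mul_add, Matrix.mul_add, Matrix.add_mul, Matrix.add_mul, h1, h2, h3]
    have hfull : (-(Abᵀ * Λ q + Λ q * Ab + Mc • Λ q)).PosDef := by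
      rw [← hfulleq]
      exact posDef_conj (hLyap q) _ (hSinv q)
    have hsub : ((-(Abᵀ * Λ q + Λ q * Ab + Mc • Λ q)).submatrix
        (Fin.castLE (hr q)) (Fin.castLE (hr q))).PosDef :=
      posDef_submatrix hfull _ (Fin.castLE_injective _)
    have hgoal : (-(Abᵀ * Λ q + Λ q * Ab + Mc • Λ q)).submatrix
        (Fin.castLE (hr q)) (Fin.castLE (hr q)) =
        -((Ab.submatrix (Fin.castLE (hr q)) (Fin.castLE (hr q)))ᵀ *
            (Λ q).submatrix (Fin.castLE (hr q)) (Fin.castLE (hr q)) +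
          (Λ q).submatrix (Fin.castLE (hr q)) (Fin.castLE (hr q)) *
            (Ab.submatrix (Fin.castLE (hr q)) (Fin.castLE (hr q))) +
          Mc • (Λ q).submatrix (Fin.castLE (hr q)) (Fin.castLE (hr q))) := by
      have h4 : (-(Abᵀ * Λ q + Λ q * Ab + Mc • Λ q)).submatrix
          (Fin.castLE (hr q)) (Fin.castLE (hr q)) =
          -((Abᵀ * Λ q).submatrix (Fin.castLE (hr q)) (Fin.castLE (hr q)) +
            (Λ q * Ab).submatrix (Fin.castLE (hr q)) (Fin.castLE (hr q)) +
            Mc • (Λ q).submatrix (Fin.castLE (hr q)) (Fin.castLE (hr q))) := by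
        ext i j
        simp
      rw [h4, submatrix_mul_isDiag (hΛdiag q) _ (Fin.castLE_injective _),
        submatrix_isDiag_mul (hΛdiag q) _ (Fin.castLE_injective _),
        ← transpose_submatrix]
    show (-((Ab.submatrix (Fin.castLE (hr q)) (Fin.castLE (hr q)))ᵀ *
            (Λ q).submatrix (Fin.castLE (hr q)) (Fin.castLE (hr q)) +
          (Λ q).submatrix (Fin.castLE (hr q)) (Fin.castLE (hr q)) *
            (Ab.submatrix (Fin.castLE (hr q)) (Fin.castLE (hr q))) +
          Mc • (Λ q).submatrix (Fin.castLE (hr q)) (Fin.castLE (hr q)))).PosDef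
    rw [← hgoal]
    exact hsub
end

section
/- Consider an LSS with D modes. Suppose there exist symmetric positive definite matrices Q_q ∈ ℝ^{n_q×n_q} and constants M, μ > 0 such that A_qᵀ Q_q + Q_q A_q + M Q_q ≺ 0 for all q and e^{−Mμ} K_{q1,q2}ᵀ Q_{q2} K_{q1,q2} ≺ Q_{q1} for all q1 ≠ q2. Let S_q be invertible matrices with Λ_q := (S_q^{−1})ᵀ Q_q S_q^{−1} diagonal, and let the reduced LSS Σ̂ with mode dimensions r_q ≤ n_q be obtained by transforming by S_q (Ā_q = S_q A_q S_q^{−1}, B̄_q = S_q B_q, C̄_q = C_q S_q^{−1}, K̄_{q1,q2} = S_{q2} K_{q1,q2} S_{q1}^{−1}) and keeping the leading r_q-blocks. Then the reduced LSS Σ̂ is uniformly exponentially stable with dwell time 2μ. -/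
open Matrix MeasureTheory

/-- A linear switched system (LSS) with `D` modes: mode `q` has state dimension `n q`,
dynamics matrices `A q`, `B q`, output matrix `C q`, and `K q1 q2` is the coupling matrix
applied to the state when switching from mode `q1` to mode `q2`. -/
structure LSS (D m p : ℕ) where
  n : Fin D → ℕ
  A : (q : Fin D) → Matrix (Fin (n q)) (Fin (n q)) ℝ
  B : (q : Fin D) → Matrix (Fin (n q)) (Fin m) ℝ
  C : (q : Fin D) → Matrix (Fin p) (Fin (n q)) ℝ
  K : (q1 q2 : Fin D) → Matrix (Fin (n q2)) (Fin (n q1)) ℝ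

/-- A switching scenario: a sequence of modes `σ 0, σ 1, …` with `σ i ≠ σ (i+1)` and
strictly increasing switching times `0 = T 0 < T 1 < ⋯`; the `(i+1)`-st dwell time is
`T (i+1) - T i`. -/
structure SwitchingScenario (D : ℕ) where
  σ : ℕ → Fin D
  T : ℕ → ℝ
  hσ : ∀ i, σ i ≠ σ (i + 1)
  hT0 : T 0 = 0
  hTmono : StrictMono T

/-- `x i` is the piece of the trajectory on the interval `[T i, T (i+1)]` (the system is
in mode `σ i` there): it solves the mode-`σ i` linear ODE driven by `u` and satisfies the
jump conditions given by the coupling matrices. -/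
def IsTrajectory {D m p : ℕ} (sys : LSS D m p) (S : SwitchingScenario D)
    (u : ℝ → Fin m → ℝ) (x : (i : ℕ) → ℝ → Fin (sys.n (S.σ i)) → ℝ) : Prop :=
  (∀ i : ℕ, ∀ s ∈ Set.Icc (S.T i) (S.T (i + 1)),
      HasDerivAt (x i) ((sys.A (S.σ i)).mulVec (x i s) + (sys.B (S.σ i)).mulVec (u s)) s) ∧
  (∀ i : ℕ, x (i + 1) (S.T (i + 1)) =
      (sys.K (S.σ i) (S.σ (i + 1))).mulVec (x i (S.T (i + 1))))

/-- `y` is the output of the trajectory `x`: `y t = C_{σ i} (x i t)` for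
`t ∈ (T i, T (i+1)]`. -/
def IsOutput {D m p : ℕ} (sys : LSS D m p) (S : SwitchingScenario D)
    (x : (i : ℕ) → ℝ → Fin (sys.n (S.σ i)) → ℝ) (y : ℝ → Fin p → ℝ) : Prop :=
  ∀ i : ℕ, ∀ s ∈ Set.Ioc (S.T i) (S.T (i + 1)), y s = (sys.C (S.σ i)).mulVec (x i s)

/-- The LSS is uniformly exponentially stable with dwell time `μ`: there exist constants
`K, M' > 0` such that every zero-input trajectory along a switching scenario whose dwell
times are all `≥ μ` satisfies `‖x(t)‖₂ ≤ K e^{−M't} ‖x(0)‖₂` for all `t ≥ 0`. -/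
def UnifExpStable {D m p : ℕ} (sys : LSS D m p) (μ : ℝ) : Prop :=
  ∃ Kc > (0:ℝ), ∃ M' > (0:ℝ),
    ∀ (S : SwitchingScenario D), (∀ i : ℕ, μ ≤ S.T (i + 1) - S.T i) →
      ∀ (x : (i : ℕ) → ℝ → Fin (sys.n (S.σ i)) → ℝ),
        IsTrajectory sys S (fun _ _ => 0) x →
        (Real.sqrt (∑ j, (x 0 0 j) ^ 2) ≤
            Kc * Real.exp (-(M' * 0)) * Real.sqrt (∑ j, (x 0 0 j) ^ 2)) ∧
        ∀ i : ℕ, ∀ t ∈ Set.Ioc (S.T i) (S.T (i + 1)),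
          Real.sqrt (∑ j, (x i t j) ^ 2) ≤
            Kc * Real.exp (-(M' * t)) * Real.sqrt (∑ j, (x 0 0 j) ^ 2)


namespace Stmt14

lemma qf_nonneg {n : ℕ} {P : Matrix (Fin n) (Fin n) ℝ} (h : P.PosSemidef) (x : Fin n → ℝ) :
    0 ≤ x ⬝ᵥ P *ᵥ x := by simpa using h.dotProduct_mulVec_nonneg x

lemma qf_symm {n : ℕ} {P : Matrix (Fin n) (Fin n) ℝ} (hP : P.IsHermitian) (x y : Fin n → ℝ) :
    x ⬝ᵥ P *ᵥ y = y ⬝ᵥ P *ᵥ x := by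
  have ht : Pᵀ = P := by
    have := hP.eq
    simpa [Matrix.IsHermitian, conjTranspose_eq_transpose_of_trivial] using this
  rw [dotProduct_mulVec, ← mulVec_transpose, ht, dotProduct_comm]

lemma qf_upper {n : ℕ} (P : Matrix (Fin n) (Fin n) ℝ) :
    ∃ C > (0:ℝ), ∀ x : Fin n → ℝ, x ⬝ᵥ P *ᵥ x ≤ C * ∑ j, x j ^ 2 := by
  refine ⟨(∑ i, ∑ j, |P i j|) + 1, by positivity, fun x => ?_⟩
  have hS : (0:ℝ) ≤ ∑ j, x j ^ 2 := by positivity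
  have key : x ⬝ᵥ P *ᵥ x ≤ (∑ i, ∑ j, |P i j|) * ∑ j, x j ^ 2 := by
    calc x ⬝ᵥ P *ᵥ x = ∑ i, ∑ j, x i * (P i j * x j) := by
          simp [dotProduct, mulVec, Finset.mul_sum]
      _ ≤ ∑ i, ∑ j, |P i j| * ∑ k, x k ^ 2 := by
          refine Finset.sum_le_sum fun i _ => Finset.sum_le_sum fun j _ => ?_
          have h1 : x i ^ 2 ≤ ∑ k, x k ^ 2 :=
            Finset.single_le_sum (fun k _ => sq_nonneg (x k)) (Finset.mem_univ i)
          have h2 : x j ^ 2 ≤ ∑ k, x k ^ 2 :=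
            Finset.single_le_sum (fun k _ => sq_nonneg (x k)) (Finset.mem_univ j)
          have ha : P i j ≤ |P i j| := le_abs_self _
          have hb : -|P i j| ≤ P i j := neg_abs_le _
          nlinarith [sq_nonneg (x i + x j), sq_nonneg (x i - x j), abs_nonneg (P i j)]
      _ = (∑ i, ∑ j, |P i j|) * ∑ j, x j ^ 2 := by
          rw [Finset.sum_mul]; congr 1; ext i; rw [Finset.sum_mul]
  nlinarith

lemma qf_cs {n : ℕ} {P : Matrix (Fin n) (Fin n) ℝ} (hP : P.PosSemidef) (x y : Fin n → ℝ) :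
    (x ⬝ᵥ P *ᵥ y) ^ 2 ≤ (x ⬝ᵥ P *ᵥ x) * (y ⬝ᵥ P *ᵥ y) := by
  have key : ∀ t : ℝ, 0 ≤ (y ⬝ᵥ P *ᵥ y) * (t * t) + (2 * (x ⬝ᵥ P *ᵥ y)) * t + x ⬝ᵥ P *ᵥ x := by
    intro t
    have h0 := qf_nonneg hP (x + t • y)
    have hsym := qf_symm hP.1 x y
    simp only [add_dotProduct, dotProduct_add, mulVec_add, mulVec_smul, smul_dotProduct,
      dotProduct_smul, smul_eq_mul] at h0
    rw [← hsym] at h0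
    nlinarith [h0]
  have := discrim_le_zero key
  simp only [discrim] at this
  nlinarith [this]

lemma qf_lower {n : ℕ} {P : Matrix (Fin n) (Fin n) ℝ} (hP : P.PosDef) :
    ∃ c > (0:ℝ), ∀ x : Fin n → ℝ, c * ∑ j, x j ^ 2 ≤ x ⬝ᵥ P *ᵥ x := by
  obtain ⟨C, hC, hCb⟩ := qf_upper P⁻¹
  refine ⟨C⁻¹, by positivity, fun x => ?_⟩
  have hdet : IsUnit P.det := isUnit_iff_ne_zero.2 hP.det_pos.ne'
  have hPy : P *ᵥ (P⁻¹ *ᵥ x) = x := by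
    rw [mulVec_mulVec, Matrix.mul_nonsing_inv _ hdet, one_mulVec]
  have hSx : ∑ j, x j ^ 2 = x ⬝ᵥ P *ᵥ (P⁻¹ *ᵥ x) := by
    rw [hPy, dotProduct]; simp [sq]
  have hcs := qf_cs hP.posSemidef x (P⁻¹ *ᵥ x)
  have hyy : (P⁻¹ *ᵥ x) ⬝ᵥ P *ᵥ (P⁻¹ *ᵥ x) = x ⬝ᵥ P⁻¹ *ᵥ x := by
    rw [hPy, dotProduct_comm]
  have hub := hCb x
  have h1 : (∑ j, x j ^ 2) ^ 2 ≤ (x ⬝ᵥ P *ᵥ x) * (C * ∑ j, x j ^ 2) := by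
    calc (∑ j, x j ^ 2) ^ 2 = (x ⬝ᵥ P *ᵥ (P⁻¹ *ᵥ x)) ^ 2 := by rw [← hSx]
      _ ≤ (x ⬝ᵥ P *ᵥ x) * ((P⁻¹ *ᵥ x) ⬝ᵥ P *ᵥ (P⁻¹ *ᵥ x)) := hcs
      _ = (x ⬝ᵥ P *ᵥ x) * (x ⬝ᵥ P⁻¹ *ᵥ x) := by rw [hyy]
      _ ≤ (x ⬝ᵥ P *ᵥ x) * (C * ∑ j, x j ^ 2) :=
          mul_le_mul_of_nonneg_left hub (qf_nonneg hP.posSemidef x)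
  have hS : (0:ℝ) ≤ ∑ j, x j ^ 2 := by positivity
  rcases eq_or_lt_of_le hS with h|h
  · rw [← h]; simp [qf_nonneg hP.posSemidef x]
  · rw [inv_mul_le_iff₀ hC]
    nlinarith [h1, qf_nonneg hP.posSemidef x]

lemma sum_extend {n r : ℕ} {e : Fin r → Fin n} (he : Function.Injective e)
    (x : Fin r → ℝ) (g : Fin n → ℝ) :
    ∑ k, g k * Function.extend e x 0 k = ∑ j, g (e j) * x j := by
  have h1 : ∑ k ∈ Finset.univ.image e, g k * Function.extend e x 0 k
      = ∑ k, g k * Function.extend e x 0 k := by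
    refine Finset.sum_subset (Finset.subset_univ _) fun k _ hk => ?_
    have : ¬ ∃ j, e j = k := by
      rintro ⟨j, rfl⟩; exact hk (Finset.mem_image_of_mem e (Finset.mem_univ j))
    rw [Function.extend_apply' _ _ _ this]; simp
  rw [← h1, Finset.sum_image (fun a _ b _ h => he h)]
  simp [he.extend_apply]

lemma extend_ne_zero {n r : ℕ} {e : Fin r → Fin n} (he : Function.Injective e)
    {x : Fin r → ℝ} (hx : x ≠ 0) : Function.extend e x 0 ≠ 0 := by
  obtain ⟨j, hj⟩ := Function.ne_iff.mp hx
  intro h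
  apply hj
  have := congrFun h (e j)
  rwa [he.extend_apply] at this

lemma mulVec_extend {n1 n2 r1 : ℕ} {e1 : Fin r1 → Fin n1} (he1 : Function.Injective e1)
    (K : Matrix (Fin n2) (Fin n1) ℝ) (z : Fin r1 → ℝ) (l : Fin n2) :
    (K *ᵥ Function.extend e1 z 0) l = ((K.submatrix id e1) *ᵥ z) l := by
  simp only [mulVec, dotProduct, submatrix_apply, id_eq]
  exact sum_extend he1 z (fun k => K l k)

lemma qf_extend {n r : ℕ} {e : Fin r → Fin n} (he : Function.Injective e)
    (P : Matrix (Fin n) (Fin n) ℝ) (z : Fin r → ℝ) :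
    Function.extend e z 0 ⬝ᵥ P *ᵥ Function.extend e z 0 = z ⬝ᵥ (P.submatrix e e) *ᵥ z := by
  set y := Function.extend e z 0 with hy
  have h1 : y ⬝ᵥ P *ᵥ y = ∑ k, (P *ᵥ y) k * y k := by
    rw [dotProduct_comm]; rfl
  rw [h1, sum_extend he z (P *ᵥ y)]
  simp only [mulVec, dotProduct, submatrix_apply]
  congr 1; ext j
  rw [sum_extend he z (fun k => P (e j) k)]
  ring

lemma posdef_submatrix {n r : ℕ} {P : Matrix (Fin n) (Fin n) ℝ} (hP : P.PosDef)
    {e : Fin r → Fin n} (he : Function.Injective e) : (P.submatrix e e).PosDef := by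
  refine Matrix.PosDef.of_dotProduct_mulVec_pos (hP.1.submatrix e) fun x hx => ?_
  have h := hP.dotProduct_mulVec_pos (extend_ne_zero he hx)
  simpa [qf_extend he P x] using h

lemma posdef_conj {n : ℕ} {P : Matrix (Fin n) (Fin n) ℝ} (hP : P.PosDef)
    (W : Matrix (Fin n) (Fin n) ℝ) (hW : IsUnit W.det) : (Wᵀ * P * W).PosDef := by
  have hherm : (Wᵀ * P * W).IsHermitian := by
    have hPt : Pᵀ = P := by
      have := hP.1.eq
      simpa [Matrix.IsHermitian, conjTranspose_eq_transpose_of_trivial] using this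
    simp only [Matrix.IsHermitian, conjTranspose_eq_transpose_of_trivial,
      transpose_mul, transpose_transpose, hPt, Matrix.mul_assoc]
  refine Matrix.PosDef.of_dotProduct_mulVec_pos hherm fun x hx => ?_
  have hWx : W *ᵥ x ≠ 0 := by
    intro h
    apply hx
    have : W⁻¹ *ᵥ (W *ᵥ x) = x := by
      rw [mulVec_mulVec, Matrix.nonsing_inv_mul _ hW, one_mulVec]
    rw [h, mulVec_zero] at this
    exact this.symm
  have h := hP.dotProduct_mulVec_pos hWx
  have key : x ⬝ᵥ (Wᵀ * P * W) *ᵥ x = (W *ᵥ x) ⬝ᵥ P *ᵥ (W *ᵥ x) := by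
    rw [← mulVec_mulVec, ← mulVec_mulVec, dotProduct_mulVec x Wᵀ, ← mulVec_transpose,
      transpose_transpose]
  simpa [key] using h

lemma posdef_diag_pos {n : ℕ} {P : Matrix (Fin n) (Fin n) ℝ} (hP : P.PosDef) (i : Fin n) :
    0 < P i i := by
  have h := hP.dotProduct_mulVec_pos (x := Pi.single i 1) (by simp [Function.ne_iff])
  simpa [dotProduct, mulVec, Pi.single_apply, Finset.sum_ite_eq] using h

-- diagonal submatrix multiplication identities
lemma diag_submatrix_mul {n r : ℕ} {Λ : Matrix (Fin n) (Fin n) ℝ} (hd : Λ.IsDiag)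
    {e : Fin r → Fin n} (he : Function.Injective e) (Y : Matrix (Fin n) (Fin n) ℝ) :
    (Λ.submatrix e e) * (Y.submatrix e e) = (Λ * Y).submatrix e e := by
  ext i k
  simp only [Matrix.mul_apply, submatrix_apply]
  rw [Finset.sum_eq_single i (fun j _ hj => by
      rw [hd (fun h => hj (he h).symm), zero_mul]) (by simp),
    Finset.sum_eq_single (e i) (fun l _ hl => by rw [hd (Ne.symm hl), zero_mul]) (by simp)]

lemma submatrix_mul_diag {n r : ℕ} {Λ : Matrix (Fin n) (Fin n) ℝ} (hd : Λ.IsDiag)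
    {e : Fin r → Fin n} (he : Function.Injective e) (Y : Matrix (Fin n) (Fin n) ℝ) :
    (Y.submatrix e e) * (Λ.submatrix e e) = (Y * Λ).submatrix e e := by
  ext i k
  simp only [Matrix.mul_apply, submatrix_apply]
  rw [Finset.sum_eq_single k (fun j _ hj => by
      rw [hd (fun h => hj (he h)), mul_zero]) (by simp),
    Finset.sum_eq_single (e k) (fun l _ hl => by rw [hd hl, mul_zero]) (by simp)]

lemma qf_nonneg' {n : ℕ} {P : Matrix (Fin n) (Fin n) ℝ} (h : P.PosSemidef) (x : Fin n → ℝ) :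
    0 ≤ x ⬝ᵥ P *ᵥ x := by simpa using h.dotProduct_mulVec_nonneg x

lemma decay {n : ℕ} {A P : Matrix (Fin n) (Fin n) ℝ} {M : ℝ}
    (hneg : (-(Aᵀ * P + P * A + M • P)).PosSemidef)
    {x : ℝ → Fin n → ℝ} {a b : ℝ} (hab : a ≤ b)
    (hx : ∀ s ∈ Set.Icc a b, HasDerivAt x (A *ᵥ (x s)) s) :
    x b ⬝ᵥ P *ᵥ x b ≤ Real.exp (-(M * (b - a))) * (x a ⬝ᵥ P *ᵥ x a) := by
  set V : ℝ → ℝ := fun t => x t ⬝ᵥ P *ᵥ x t with hV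
  set g : ℝ → ℝ := fun t => Real.exp (M * t) * V t with hg
  have hVd : ∀ s ∈ Set.Icc a b, HasDerivAt V
      ((A *ᵥ x s) ⬝ᵥ P *ᵥ x s + x s ⬝ᵥ P *ᵥ (A *ᵥ x s)) s := by
    intro s hs
    have hj : ∀ j, HasDerivAt (fun t => x t j) ((A *ᵥ x s) j) s :=
      fun j => hasDerivAt_pi.mp (hx s hs) j
    have hsum : HasDerivAt (fun t => ∑ j, x t j * ∑ k, P j k * x t k)
        (∑ j, ((A *ᵥ x s) j * ∑ k, P j k * x s k + x s j * ∑ k, P j k * (A *ᵥ x s) k)) s := by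
      apply HasDerivAt.fun_sum
      intro j _
      exact (hj j).mul (HasDerivAt.fun_sum fun k _ => (hj k).const_mul (P j k))
    have hfun : V = fun t => ∑ j, x t j * ∑ k, P j k * x t k := by
      funext t; simp [hV, dotProduct, mulVec]
    rw [hfun]
    convert hsum using 1
    simp [dotProduct, mulVec, Finset.sum_add_distrib]
  have hgd : ∀ s ∈ Set.Icc a b, HasDerivAt g
      (Real.exp (M * s) * M * V s +
        Real.exp (M * s) * ((A *ᵥ x s) ⬝ᵥ P *ᵥ x s + x s ⬝ᵥ P *ᵥ (A *ᵥ x s))) s := by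
    intro s hs
    have hexp : HasDerivAt (fun t => Real.exp (M * t)) (Real.exp (M * s) * M) s := by
      simpa using (((hasDerivAt_id s).const_mul M).exp)
    exact hexp.mul (hVd s hs)
  have hsign : ∀ s : ℝ, M * V s + ((A *ᵥ x s) ⬝ᵥ P *ᵥ x s + x s ⬝ᵥ P *ᵥ (A *ᵥ x s)) ≤ 0 := by
    intro s
    have h0 := qf_nonneg' hneg (x s)
    have e1 : x s ⬝ᵥ (-(Aᵀ * P + P * A + M • P)) *ᵥ x s =
        -(x s ⬝ᵥ (Aᵀ * P) *ᵥ x s + x s ⬝ᵥ (P * A) *ᵥ x s + M * V s) := by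
      simp only [neg_mulVec, add_mulVec, dotProduct_neg, dotProduct_add, smul_mulVec,
        dotProduct_smul, smul_eq_mul, hV]
      try ring
    have e2 : x s ⬝ᵥ (Aᵀ * P) *ᵥ x s = (A *ᵥ x s) ⬝ᵥ P *ᵥ x s := by
      rw [← mulVec_mulVec, dotProduct_mulVec (x s) Aᵀ, ← mulVec_transpose, transpose_transpose]
    have e3 : x s ⬝ᵥ (P * A) *ᵥ x s = x s ⬝ᵥ P *ᵥ (A *ᵥ x s) := by
      rw [← mulVec_mulVec]
    rw [e1, e2, e3] at h0
    linarith
  have hanti : AntitoneOn g (Set.Icc a b) := by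
    apply antitoneOn_of_deriv_nonpos (convex_Icc a b)
    · exact fun s hs => ((hgd s hs).continuousAt).continuousWithinAt
    · intro s hs
      rw [interior_Icc] at hs
      exact ((hgd s (Set.mem_Icc_of_Ioo hs)).differentiableAt).differentiableWithinAt
    · intro s hs
      rw [interior_Icc] at hs
      rw [(hgd s (Set.mem_Icc_of_Ioo hs)).deriv]
      have := hsign s
      have hexp := Real.exp_pos (M * s)
      nlinarith [this, hexp]
  have h := hanti (Set.left_mem_Icc.mpr hab) (Set.right_mem_Icc.mpr hab) hab
  simp only [hg] at h
  have hb' : (0:ℝ) < Real.exp (M * b) := Real.exp_pos _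
  have e4 : Real.exp (-(M * (b - a))) * Real.exp (M * b) = Real.exp (M * a) := by
    rw [← Real.exp_add]; congr 1; ring
  refine (mul_le_mul_iff_of_pos_right hb').1 ?_
  calc (x b ⬝ᵥ P *ᵥ x b) * Real.exp (M * b) = Real.exp (M * b) * V b := by
        rw [mul_comm]
    _ ≤ Real.exp (M * a) * V a := h
    _ = Real.exp (-(M * (b - a))) * (x a ⬝ᵥ P *ᵥ x a) * Real.exp (M * b) := by
        rw [← e4]; ring

lemma qf_nonneg'' {n : ℕ} {P : Matrix (Fin n) (Fin n) ℝ} (h : P.PosSemidef) (x : Fin n → ℝ) :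
    0 ≤ x ⬝ᵥ P *ᵥ x := by simpa using h.dotProduct_mulVec_nonneg x

lemma diag_qf {n : ℕ} {Λ : Matrix (Fin n) (Fin n) ℝ} (hd : Λ.IsDiag) (w : Fin n → ℝ) :
    w ⬝ᵥ Λ *ᵥ w = ∑ l, Λ l l * w l ^ 2 := by
  simp only [dotProduct, mulVec]
  refine Finset.sum_congr rfl fun l _ => ?_
  rw [Finset.sum_eq_single l (fun m _ hm => by rw [hd (Ne.symm hm), zero_mul]) (by simp)]
  ring

lemma psd_diag_nonneg {n : ℕ} {Λ : Matrix (Fin n) (Fin n) ℝ} (hΛ : Λ.PosSemidef) (l : Fin n) :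
    0 ≤ Λ l l := by
  have := qf_nonneg'' hΛ (Pi.single l 1)
  simpa [dotProduct, mulVec, Pi.single_apply, Finset.sum_ite_eq] using this

-- these are re-proved here for a self-contained test; final file has them once
lemma sum_extend' {n r : ℕ} {e : Fin r → Fin n} (he : Function.Injective e)
    (x : Fin r → ℝ) (g : Fin n → ℝ) :
    ∑ k, g k * Function.extend e x 0 k = ∑ j, g (e j) * x j := by
  have h1 : ∑ k ∈ Finset.univ.image e, g k * Function.extend e x 0 k
      = ∑ k, g k * Function.extend e x 0 k := by
    refine Finset.sum_subset (Finset.subset_univ _) fun k _ hk => ?_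
    have : ¬ ∃ j, e j = k := by
      rintro ⟨j, rfl⟩; exact hk (Finset.mem_image_of_mem e (Finset.mem_univ j))
    rw [Function.extend_apply' _ _ _ this]; simp
  rw [← h1, Finset.sum_image (fun a _ b _ h => he h)]
  simp [he.extend_apply]

lemma qf_extend' {n r : ℕ} {e : Fin r → Fin n} (he : Function.Injective e)
    (P : Matrix (Fin n) (Fin n) ℝ) (z : Fin r → ℝ) :
    Function.extend e z 0 ⬝ᵥ P *ᵥ Function.extend e z 0 = z ⬝ᵥ (P.submatrix e e) *ᵥ z := by
  set y := Function.extend e z 0 with hy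
  have h1 : y ⬝ᵥ P *ᵥ y = ∑ k, (P *ᵥ y) k * y k := by
    rw [dotProduct_comm]; rfl
  rw [h1, sum_extend' he z (P *ᵥ y)]
  simp only [mulVec, dotProduct, submatrix_apply]
  congr 1; ext j
  rw [sum_extend' he z (fun k => P (e j) k)]
  ring

lemma jump {n1 n2 r1 r2 : ℕ} {Λ1 : Matrix (Fin n1) (Fin n1) ℝ}
    {Λ2 : Matrix (Fin n2) (Fin n2) ℝ} {Kb : Matrix (Fin n2) (Fin n1) ℝ} {c : ℝ} (hc : 0 ≤ c)
    (h : (Λ1 - c • (Kbᵀ * Λ2 * Kb)).PosSemidef) (hd2 : Λ2.IsDiag) (hΛ2 : Λ2.PosSemidef)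
    {e1 : Fin r1 → Fin n1} (he1 : Function.Injective e1)
    {e2 : Fin r2 → Fin n2} (he2 : Function.Injective e2) (z : Fin r1 → ℝ) :
    c * ((Kb.submatrix e2 e1 *ᵥ z) ⬝ᵥ (Λ2.submatrix e2 e2) *ᵥ (Kb.submatrix e2 e1 *ᵥ z))
      ≤ z ⬝ᵥ (Λ1.submatrix e1 e1) *ᵥ z := by
  set zh := Function.extend e1 z 0 with hzh
  set w := Kb *ᵥ zh with hw
  have h0 := qf_nonneg'' h zh
  have hq1 : zh ⬝ᵥ Λ1 *ᵥ zh = z ⬝ᵥ (Λ1.submatrix e1 e1) *ᵥ z := qf_extend' he1 Λ1 z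
  have hq2 : zh ⬝ᵥ (Kbᵀ * Λ2 * Kb) *ᵥ zh = w ⬝ᵥ Λ2 *ᵥ w := by
    rw [← mulVec_mulVec, ← mulVec_mulVec, dotProduct_mulVec zh Kbᵀ, ← mulVec_transpose,
      transpose_transpose]
  have h0' : c * (w ⬝ᵥ Λ2 *ᵥ w) ≤ z ⬝ᵥ (Λ1.submatrix e1 e1) *ᵥ z := by
    rw [sub_mulVec, dotProduct_sub, smul_mulVec, dotProduct_smul, smul_eq_mul,
      hq1, hq2] at h0
    linarith
  refine le_trans (mul_le_mul_of_nonneg_left ?_ hc) h0'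
  -- monotonicity of the diagonal quadratic form under restriction
  have hwj : ∀ j, (Kb.submatrix e2 e1 *ᵥ z) j = w (e2 j) := by
    intro j
    simp only [hw, mulVec, dotProduct, submatrix_apply, hzh]
    rw [sum_extend' he1 z (fun l => Kb (e2 j) l)]
  have hd2' : (Λ2.submatrix e2 e2).IsDiag := fun i j hij => hd2 (fun h => hij (he2 h))
  rw [diag_qf hd2', diag_qf hd2]
  calc ∑ j, (Λ2.submatrix e2 e2) j j * (Kb.submatrix e2 e1 *ᵥ z) j ^ 2
      = ∑ j, Λ2 (e2 j) (e2 j) * w (e2 j) ^ 2 := by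
        refine Finset.sum_congr rfl fun j _ => ?_
        rw [hwj j]; rfl
    _ = ∑ l ∈ Finset.univ.image e2, Λ2 l l * w l ^ 2 :=
        (Finset.sum_image (f := fun l => Λ2 l l * w l ^ 2) (g := e2) (fun a _ b _ h => he2 h)).symm
    _ ≤ ∑ l, Λ2 l l * w l ^ 2 :=
        Finset.sum_le_sum_of_subset_of_nonneg (Finset.subset_univ _)
          (fun l _ _ => mul_nonneg (psd_diag_nonneg hΛ2 l) (sq_nonneg _))

lemma conj_lyap {n : ℕ} (S W A Q : Matrix (Fin n) (Fin n) ℝ) (h1 : W * S = 1) (M : ℝ) :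
    (S * A * W)ᵀ * (Wᵀ * Q * W) + (Wᵀ * Q * W) * (S * A * W) + M • (Wᵀ * Q * W)
      = Wᵀ * (Aᵀ * Q + Q * A + M • Q) * W := by
  have ht : Sᵀ * Wᵀ = 1 := by rw [← transpose_mul, h1, transpose_one]
  have c1 : ∀ X : Matrix (Fin n) (Fin n) ℝ, Sᵀ * (Wᵀ * X) = X := fun X => by
    rw [← Matrix.mul_assoc, ht, Matrix.one_mul]
  have c2 : ∀ X : Matrix (Fin n) (Fin n) ℝ, W * (S * X) = X := fun X => by
    rw [← Matrix.mul_assoc, h1, Matrix.one_mul]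
  simp only [transpose_mul, transpose_transpose, Matrix.mul_add, Matrix.add_mul,
    Matrix.mul_smul, Matrix.smul_mul, Matrix.mul_assoc]
  rw [c1, c2]

lemma conj_jump {n1 n2 : ℕ} (S1 W1 : Matrix (Fin n1) (Fin n1) ℝ)
    (S2 W2 : Matrix (Fin n2) (Fin n2) ℝ) (K : Matrix (Fin n2) (Fin n1) ℝ)
    (Q2 : Matrix (Fin n2) (Fin n2) ℝ) (h2 : W2 * S2 = 1) :
    (S2 * K * W1)ᵀ * (W2ᵀ * Q2 * W2) * (S2 * K * W1) = W1ᵀ * (Kᵀ * Q2 * K) * W1 := by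
  have ht : S2ᵀ * W2ᵀ = 1 := by rw [← transpose_mul, h2, transpose_one]
  have c1 : ∀ X : Matrix (Fin n2) (Fin n1) ℝ, S2ᵀ * (W2ᵀ * X) = X := fun X => by
    rw [← Matrix.mul_assoc, ht, Matrix.one_mul]
  have c2 : ∀ X : Matrix (Fin n2) (Fin n1) ℝ, W2 * (S2 * X) = X := fun X => by
    rw [← Matrix.mul_assoc, h2, Matrix.one_mul]
  simp only [transpose_mul, transpose_transpose, Matrix.mul_assoc]
  rw [c2, c1]
end Stmt14

/-- Corollary 5: suppose positive definite `Q_q` satisfy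
`A_qᵀ Q_q + Q_q A_q + M Q_q ≺ 0` for all `q` and
`e^{−Mμ} K_{q1,q2}ᵀ Q_{q2} K_{q1,q2} ≺ Q_{q1}` for all `q1 ≠ q2`.  Let `S_q` be invertible
with `Λ_q := (S_q⁻¹)ᵀ Q_q S_q⁻¹` diagonal, and let the reduced LSS be obtained by
transforming each mode by `S_q` and keeping the leading `r_q`-blocks (`r_q ≤ n_q`).
Then the reduced LSS is uniformly exponentially stable with dwell time `2μ`. -/
theorem stmt_14 {D m p : ℕ} (sys : LSS D m p)
    (Q : (q : Fin D) → Matrix (Fin (sys.n q)) (Fin (sys.n q)) ℝ)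
    (hQ : ∀ q, (Q q).PosDef)
    (Mc μ : ℝ) (hMc : 0 < Mc) (hμ : 0 < μ)
    (hLyap : ∀ q, (-((sys.A q)ᵀ * Q q + Q q * sys.A q + Mc • Q q)).PosDef)
    (hK : ∀ q1 q2, q1 ≠ q2 →
      (Q q1 - Real.exp (-(Mc * μ)) • ((sys.K q1 q2)ᵀ * Q q2 * sys.K q1 q2)).PosDef)
    (Sq : (q : Fin D) → Matrix (Fin (sys.n q)) (Fin (sys.n q)) ℝ)
    (hSq : ∀ q, IsUnit (Sq q).det)
    (hdiag : ∀ q, (((Sq q)⁻¹)ᵀ * Q q * (Sq q)⁻¹).IsDiag)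
    (r : Fin D → ℕ) (hr : ∀ q, r q ≤ sys.n q) :
    UnifExpStable
      (LSS.mk r
        (fun q => (Sq q * sys.A q * (Sq q)⁻¹).submatrix (Fin.castLE (hr q)) (Fin.castLE (hr q)))
        (fun q => (Sq q * sys.B q).submatrix (Fin.castLE (hr q)) id)
        (fun q => (sys.C q * (Sq q)⁻¹).submatrix id (Fin.castLE (hr q)))
        (fun q1 q2 => (Sq q2 * sys.K q1 q2 * (Sq q1)⁻¹).submatrix
          (Fin.castLE (hr q2)) (Fin.castLE (hr q1))))
      (2 * μ) := by
  classical
  by_cases hD : D = 0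
  · subst hD
    exact ⟨1, one_pos, 1, one_pos, fun S => (S.σ 0).elim0⟩
  haveI : Nonempty (Fin D) := ⟨⟨0, Nat.pos_of_ne_zero hD⟩⟩
  -- abbreviations
  set e : (q : Fin D) → Fin (r q) → Fin (sys.n q) := fun q => Fin.castLE (hr q) with he_def
  have he : ∀ q, Function.Injective (e q) := fun q => Fin.castLE_injective _
  set W : (q : Fin D) → Matrix (Fin (sys.n q)) (Fin (sys.n q)) ℝ := fun q => (Sq q)⁻¹
    with hW_def
  have hWS : ∀ q, W q * Sq q = 1 := fun q => Matrix.nonsing_inv_mul _ (hSq q)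
  have hWdet : ∀ q, IsUnit (W q).det := fun q => Matrix.isUnit_nonsing_inv_det _ (hSq q)
  set Λ : (q : Fin D) → Matrix (Fin (sys.n q)) (Fin (sys.n q)) ℝ :=
    fun q => (W q)ᵀ * Q q * W q with hΛ_def
  have hΛpos : ∀ q, (Λ q).PosDef := fun q => Stmt14.posdef_conj (hQ q) _ (hWdet q)
  have hΛdiag : ∀ q, (Λ q).IsDiag := hdiag
  set Λh : (q : Fin D) → Matrix (Fin (r q)) (Fin (r q)) ℝ :=
    fun q => (Λ q).submatrix (e q) (e q) with hΛh_def
  have hΛhpos : ∀ q, (Λh q).PosDef := fun q => Stmt14.posdef_submatrix (hΛpos q) (he q)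
  set Ah : (q : Fin D) → Matrix (Fin (r q)) (Fin (r q)) ℝ :=
    fun q => (Sq q * sys.A q * W q).submatrix (e q) (e q) with hAh_def
  -- reduced Lyapunov inequality
  have hlyap' : ∀ q, (-((Ah q)ᵀ * Λh q + Λh q * Ah q + Mc • Λh q)).PosSemidef := by
    intro q
    have hfull : (Sq q * sys.A q * W q)ᵀ * Λ q + Λ q * (Sq q * sys.A q * W q) + Mc • Λ q
        = (W q)ᵀ * ((sys.A q)ᵀ * Q q + Q q * sys.A q + Mc • Q q) * W q :=
      Stmt14.conj_lyap (Sq q) (W q) (sys.A q) (Q q) (hWS q) Mc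
    have hneg : (-((Sq q * sys.A q * W q)ᵀ * Λ q + Λ q * (Sq q * sys.A q * W q)
        + Mc • Λ q)).PosDef := by
      rw [hfull]
      have hx : -((W q)ᵀ * ((sys.A q)ᵀ * Q q + Q q * sys.A q + Mc • Q q) * W q)
          = (W q)ᵀ * (-((sys.A q)ᵀ * Q q + Q q * sys.A q + Mc • Q q)) * W q := by
        rw [Matrix.mul_neg, Matrix.neg_mul]
      rw [hx]
      exact Stmt14.posdef_conj (hLyap q) _ (hWdet q)
    have hsub : (Ah q)ᵀ * Λh q + Λh q * Ah q + Mc • Λh q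
        = ((Sq q * sys.A q * W q)ᵀ * Λ q + Λ q * (Sq q * sys.A q * W q)
            + Mc • Λ q).submatrix (e q) (e q) := by
      rw [hAh_def, hΛh_def]
      simp only [Matrix.transpose_submatrix, Matrix.submatrix_add, Matrix.submatrix_smul,
        Stmt14.submatrix_mul_diag (hΛdiag q) (he q), Stmt14.diag_submatrix_mul (hΛdiag q) (he q)]
      rfl
    rw [hsub]
    exact (hneg.posSemidef).submatrix (e q)
  -- reduced jump inequality (quadratic form level)
  have hjump' : ∀ q1 q2, q1 ≠ q2 → ∀ z : Fin (r q1) → ℝ,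
      Real.exp (-(Mc * μ)) *
        ((((Sq q2 * sys.K q1 q2 * W q1).submatrix (e q2) (e q1)) *ᵥ z) ⬝ᵥ
          (Λh q2) *ᵥ (((Sq q2 * sys.K q1 q2 * W q1).submatrix (e q2) (e q1)) *ᵥ z))
        ≤ z ⬝ᵥ (Λh q1) *ᵥ z := by
    intro q1 q2 hne z
    refine Stmt14.jump (Real.exp_nonneg _) ?_ (hΛdiag q2) (hΛpos q2).posSemidef
      (he q1) (he q2) z
    rw [Stmt14.conj_jump (Sq q1) (W q1) (Sq q2) (W q2) (sys.K q1 q2) (Q q2) (hWS q2)]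
    have hre : Λ q1 - Real.exp (-(Mc * μ)) •
        ((W q1)ᵀ * ((sys.K q1 q2)ᵀ * Q q2 * sys.K q1 q2) * W q1)
        = (W q1)ᵀ * (Q q1 - Real.exp (-(Mc * μ)) •
            ((sys.K q1 q2)ᵀ * Q q2 * sys.K q1 q2)) * W q1 := by
      rw [Matrix.mul_sub, Matrix.sub_mul, hΛ_def]
      congr 1
      rw [Matrix.mul_smul, Matrix.smul_mul]
    rw [hre]
    exact (Stmt14.posdef_conj (hK q1 q2 hne) _ (hWdet q1)).posSemidef
  -- constants
  choose cl hclpos hcl using fun q => Stmt14.qf_lower (hΛhpos q)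
  choose cu hcupos hcu using fun q => Stmt14.qf_upper (Λh q)
  set cmin := Finset.univ.inf' Finset.univ_nonempty cl with hcmin_def
  set cmax := Finset.univ.sup' Finset.univ_nonempty cu with hcmax_def
  have hcminpos : 0 < cmin := by
    rw [hcmin_def, Finset.lt_inf'_iff]
    exact fun q _ => hclpos q
  have hcmaxpos : 0 < cmax := by
    obtain ⟨q0⟩ := (inferInstance : Nonempty (Fin D))
    exact lt_of_lt_of_le (hcupos q0) (Finset.le_sup' cu (Finset.mem_univ q0))
  have hcminle : ∀ q, cmin ≤ cl q := fun q => Finset.inf'_le cl (Finset.mem_univ q)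
  have hcmaxle : ∀ q, cu q ≤ cmax := fun q => Finset.le_sup' cu (Finset.mem_univ q)
  refine ⟨Real.sqrt (cmax / cmin) + 1, by positivity, Mc / 4, by positivity, ?_⟩
  intro S hdwell x hx
  -- trajectory facts
  have hder : ∀ i, ∀ s ∈ Set.Icc (S.T i) (S.T (i + 1)),
      HasDerivAt (x i) ((Ah (S.σ i)) *ᵥ x i s) s := by
    intro i s hs
    have h := hx.1 i s hs
    simpa [show (fun _ : Fin m => (0:ℝ)) = 0 from rfl, Matrix.mulVec_zero] using h
  set V : (i : ℕ) → ℝ → ℝ := fun i t => x i t ⬝ᵥ (Λh (S.σ i)) *ᵥ x i t with hV_def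
  have hVpos : ∀ i t, 0 ≤ V i t := fun i t =>
    Stmt14.qf_nonneg (hΛhpos (S.σ i)).posSemidef (x i t)
  have hT0le : ∀ i, 0 ≤ S.T i := fun i => by
    have := S.hTmono.monotone (Nat.zero_le i)
    rwa [S.hT0] at this
  have hdecay : ∀ i, ∀ t ∈ Set.Icc (S.T i) (S.T (i + 1)),
      V i t ≤ Real.exp (-(Mc * (t - S.T i))) * V i (S.T i) := by
    intro i t ht
    exact Stmt14.decay (hlyap' (S.σ i)) ht.1
      (fun s hs => hder i s ⟨hs.1, le_trans hs.2 ht.2⟩)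
  have hchain : ∀ i, V i (S.T i) ≤ Real.exp (-(Mc / 2 * S.T i)) * V 0 0 := by
    intro i
    induction i with
    | zero => rw [S.hT0]; simp
    | succ i ih =>
      have hTle : S.T i ≤ S.T (i + 1) := (S.hTmono (Nat.lt_succ_self i)).le
      have hjs : V (i + 1) (S.T (i + 1)) ≤ Real.exp (Mc * μ) * V i (S.T (i + 1)) := by
        have h := hjump' (S.σ i) (S.σ (i + 1)) (S.hσ i) (x i (S.T (i + 1)))
        have hxj := hx.2 i
        have key : ∀ A : ℝ, Real.exp (Mc * μ) * (Real.exp (-(Mc * μ)) * A) = A := by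
          intro A
          rw [← mul_assoc, ← Real.exp_add]
          simp
        calc V (i + 1) (S.T (i + 1))
            = (((Sq (S.σ (i+1)) * sys.K (S.σ i) (S.σ (i+1)) * W (S.σ i)).submatrix
                (e (S.σ (i+1))) (e (S.σ i))) *ᵥ x i (S.T (i + 1))) ⬝ᵥ
              (Λh (S.σ (i+1))) *ᵥ
              (((Sq (S.σ (i+1)) * sys.K (S.σ i) (S.σ (i+1)) * W (S.σ i)).submatrix
                (e (S.σ (i+1))) (e (S.σ i))) *ᵥ x i (S.T (i + 1))) := by
              simp only [hV_def]
              rw [hxj]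
          _ = Real.exp (Mc * μ) * (Real.exp (-(Mc * μ)) * _) := (key _).symm
          _ ≤ Real.exp (Mc * μ) * (x i (S.T (i + 1)) ⬝ᵥ (Λh (S.σ i)) *ᵥ x i (S.T (i + 1))) :=
              mul_le_mul_of_nonneg_left h (Real.exp_nonneg _)
          _ = Real.exp (Mc * μ) * V i (S.T (i + 1)) := rfl
      have hdec := hdecay i (S.T (i + 1)) ⟨hTle, le_rfl⟩
      have hd := hdwell i
      calc V (i + 1) (S.T (i + 1)) ≤ Real.exp (Mc * μ) * V i (S.T (i + 1)) := hjs
        _ ≤ Real.exp (Mc * μ) * (Real.exp (-(Mc * (S.T (i+1) - S.T i))) * V i (S.T i)) :=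
            mul_le_mul_of_nonneg_left hdec (Real.exp_nonneg _)
        _ ≤ Real.exp (Mc * μ) * (Real.exp (-(Mc * (S.T (i+1) - S.T i))) *
              (Real.exp (-(Mc / 2 * S.T i)) * V 0 0)) := by
            apply mul_le_mul_of_nonneg_left _ (Real.exp_nonneg _)
            exact mul_le_mul_of_nonneg_left ih (Real.exp_nonneg _)
        _ ≤ Real.exp (-(Mc / 2 * S.T (i + 1))) * V 0 0 := by
            have hexp : Real.exp (Mc * μ) * Real.exp (-(Mc * (S.T (i+1) - S.T i))) *
                Real.exp (-(Mc / 2 * S.T i)) ≤ Real.exp (-(Mc / 2 * S.T (i + 1))) := by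
              rw [← Real.exp_add, ← Real.exp_add]
              apply Real.exp_le_exp.2
              nlinarith [mul_nonneg hMc.le (by linarith : (0:ℝ) ≤ S.T (i+1) - S.T i - 2 * μ)]
            calc Real.exp (Mc * μ) * (Real.exp (-(Mc * (S.T (i+1) - S.T i))) *
                  (Real.exp (-(Mc / 2 * S.T i)) * V 0 0))
                = Real.exp (Mc * μ) * Real.exp (-(Mc * (S.T (i+1) - S.T i))) *
                  Real.exp (-(Mc / 2 * S.T i)) * V 0 0 := by ring
              _ ≤ Real.exp (-(Mc / 2 * S.T (i + 1))) * V 0 0 :=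
                  mul_le_mul_of_nonneg_right hexp (hVpos 0 0)
  have hbound : ∀ i, ∀ t ∈ Set.Ioc (S.T i) (S.T (i + 1)),
      V i t ≤ Real.exp (-(Mc / 2 * t)) * V 0 0 := by
    intro i t ht
    have h1 := hdecay i t ⟨ht.1.le, ht.2⟩
    have h2 := hchain i
    have hti : S.T i ≤ t := ht.1.le
    calc V i t ≤ Real.exp (-(Mc * (t - S.T i))) * V i (S.T i) := h1
      _ ≤ Real.exp (-(Mc * (t - S.T i))) * (Real.exp (-(Mc / 2 * S.T i)) * V 0 0) :=
          mul_le_mul_of_nonneg_left h2 (Real.exp_nonneg _)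
      _ = Real.exp (-(Mc * (t - S.T i)) + -(Mc / 2 * S.T i)) * V 0 0 := by
          rw [Real.exp_add]; ring
      _ ≤ Real.exp (-(Mc / 2 * t)) * V 0 0 := by
          apply mul_le_mul_of_nonneg_right _ (hVpos 0 0)
          apply Real.exp_le_exp.2
          nlinarith [mul_nonneg hMc.le (by linarith : (0:ℝ) ≤ t - S.T i)]
  constructor
  · have h0 : (0:ℝ) ≤ Real.sqrt (∑ j, (x 0 0 j) ^ 2) := Real.sqrt_nonneg _
    have h1 : (0:ℝ) ≤ Real.sqrt (cmax / cmin) := Real.sqrt_nonneg _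
    simp only [mul_zero, neg_zero, Real.exp_zero, mul_one]
    nlinarith
  · intro i t ht
    set R : ℝ := (Real.sqrt (cmax / cmin) + 1) * Real.exp (-(Mc / 4 * t)) with hR_def
    have hRnn : 0 ≤ R := by positivity
    have hS00 : (0:ℝ) ≤ ∑ j, (x 0 0 j) ^ 2 := by positivity
    have hSit : (0:ℝ) ≤ ∑ j, (x i t j) ^ 2 := by positivity
    have hVle := hbound i t ht
    have hlow := hcl (S.σ i) (x i t)
    have hup := hcu (S.σ 0) (x 0 0)
    have hsq : ∑ j, (x i t j) ^ 2 ≤ R ^ 2 * ∑ j, (x 0 0 j) ^ 2 := by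
      have hchain2 : cmin * ∑ j, (x i t j) ^ 2 ≤
          Real.exp (-(Mc / 2 * t)) * (cmax * ∑ j, (x 0 0 j) ^ 2) := by
        calc cmin * ∑ j, (x i t j) ^ 2 ≤ cl (S.σ i) * ∑ j, (x i t j) ^ 2 :=
              mul_le_mul_of_nonneg_right (hcminle _) hSit
          _ ≤ V i t := hlow
          _ ≤ Real.exp (-(Mc / 2 * t)) * V 0 0 := hVle
          _ ≤ Real.exp (-(Mc / 2 * t)) * (cu (S.σ 0) * ∑ j, (x 0 0 j) ^ 2) :=
              mul_le_mul_of_nonneg_left hup (Real.exp_nonneg _)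
          _ ≤ Real.exp (-(Mc / 2 * t)) * (cmax * ∑ j, (x 0 0 j) ^ 2) := by
              apply mul_le_mul_of_nonneg_left _ (Real.exp_nonneg _)
              exact mul_le_mul_of_nonneg_right (hcmaxle _) hS00
      have hE2 : Real.exp (-(Mc / 4 * t)) * Real.exp (-(Mc / 4 * t))
          = Real.exp (-(Mc / 2 * t)) := by
        rw [← Real.exp_add]; congr 1; ring
      have hs1 : Real.sqrt (cmax / cmin) ^ 2 = cmax / cmin := Real.sq_sqrt (by positivity)
      have hR2 : cmax * Real.exp (-(Mc / 2 * t)) ≤ cmin * R ^ 2 := by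
        have hrr : (cmax / cmin) * Real.exp (-(Mc / 2 * t)) ≤ R ^ 2 := by
          rw [hR_def]
          have hEpos : 0 < Real.exp (-(Mc / 4 * t)) := Real.exp_pos _
          nlinarith [Real.sqrt_nonneg (cmax / cmin), hs1, hE2,
            mul_pos hEpos hEpos, div_nonneg hcmaxpos.le hcminpos.le]
        have := mul_le_mul_of_nonneg_left hrr hcminpos.le
        calc cmax * Real.exp (-(Mc / 2 * t))
            = cmin * ((cmax / cmin) * Real.exp (-(Mc / 2 * t))) := by
              field_simp
          _ ≤ cmin * R ^ 2 := this
      have key : cmin * ∑ j, (x i t j) ^ 2 ≤ cmin * (R ^ 2 * ∑ j, (x 0 0 j) ^ 2) := by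
        calc cmin * ∑ j, (x i t j) ^ 2
            ≤ Real.exp (-(Mc / 2 * t)) * (cmax * ∑ j, (x 0 0 j) ^ 2) := hchain2
          _ = (cmax * Real.exp (-(Mc / 2 * t))) * ∑ j, (x 0 0 j) ^ 2 := by ring
          _ ≤ (cmin * R ^ 2) * ∑ j, (x 0 0 j) ^ 2 :=
              mul_le_mul_of_nonneg_right hR2 hS00
          _ = cmin * (R ^ 2 * ∑ j, (x 0 0 j) ^ 2) := by ring
      exact le_of_mul_le_mul_left key hcminpos
    have hs := Real.sqrt_le_sqrt hsq
    rwa [Real.sqrt_mul (sq_nonneg R), Real.sqrt_sq hRnn] at hs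
end

section
/- Let P, Q ∈ ℝ^{n×n} be symmetric positive definite. Let U ∈ ℝ^{n×n} be an invertible matrix with P = U Uᵀ, and let Uᵀ Q U = V Λ² Vᵀ be a spectral decomposition with V orthogonal and Λ diagonal with strictly positive diagonal entries. Define S = Λ^{1/2} Vᵀ U^{−1}. Then S is invertible, S P Sᵀ = Λ, and (S^{−1})ᵀ Q S^{−1} = Λ; that is, the state-space transformation S simultaneously makes the two Gramians equal and diagonal. -/
open Matrix

/-- let `P, Q` be symmetric positive definite, `U` invertible with
`P = U Uᵀ`, and `Uᵀ Q U = V Λ² Vᵀ` a spectral decomposition with `V` orthogonal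
(`Vᵀ V = I`) and `Λ = diagonal d` with `d i > 0`.  Then `S = Λ^{1/2} Vᵀ U⁻¹` is
invertible, `S P Sᵀ = Λ` and `(S⁻¹)ᵀ Q S⁻¹ = Λ`. -/
theorem stmt_15 {n : ℕ} (P Q U V : Matrix (Fin n) (Fin n) ℝ)
    (hP : P.PosDef) (hQ : Q.PosDef)
    (hU : IsUnit U.det) (hPU : P = U * Uᵀ)
    (hV : Vᵀ * V = 1)
    (d : Fin n → ℝ) (hd : ∀ i, 0 < d i)
    (hspec : Uᵀ * Q * U = V * (Matrix.diagonal d) ^ 2 * Vᵀ) :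
    IsUnit (Matrix.diagonal (fun i => Real.sqrt (d i)) * Vᵀ * U⁻¹).det ∧
    (Matrix.diagonal (fun i => Real.sqrt (d i)) * Vᵀ * U⁻¹) * P *
        (Matrix.diagonal (fun i => Real.sqrt (d i)) * Vᵀ * U⁻¹)ᵀ = Matrix.diagonal d ∧
    ((Matrix.diagonal (fun i => Real.sqrt (d i)) * Vᵀ * U⁻¹)⁻¹)ᵀ * Q *
        (Matrix.diagonal (fun i => Real.sqrt (d i)) * Vᵀ * U⁻¹)⁻¹ = Matrix.diagonal d := by
  set D : Matrix (Fin n) (Fin n) ℝ := Matrix.diagonal (fun i => Real.sqrt (d i)) with hD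
  set E : Matrix (Fin n) (Fin n) ℝ := Matrix.diagonal (fun i => (Real.sqrt (d i))⁻¹) with hE
  have hs : ∀ i, Real.sqrt (d i) ≠ 0 := fun i => ne_of_gt (Real.sqrt_pos.2 (hd i))
  have hUT : IsUnit Uᵀ.det := by rwa [Matrix.det_transpose]
  have hVc : ∀ X : Matrix (Fin n) (Fin n) ℝ, Vᵀ * (V * X) = X := fun X => by
    rw [← Matrix.mul_assoc, hV, Matrix.one_mul]
  have hVV : V * Vᵀ = 1 := by
    rw [mul_eq_one_comm] at hV; exact hV
  have hDE : D * E = 1 := by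
    rw [hD, hE, Matrix.diagonal_mul_diagonal,
      show (fun i => Real.sqrt (d i) * (Real.sqrt (d i))⁻¹) = fun _ => (1 : ℝ) from
        funext fun i => mul_inv_cancel₀ (hs i), Matrix.diagonal_one]
  -- right inverse of S
  have hright : (D * Vᵀ * U⁻¹) * (U * (V * E)) = 1 := by
    calc (D * Vᵀ * U⁻¹) * (U * (V * E))
        = D * (Vᵀ * (U⁻¹ * (U * (V * E)))) := by simp [Matrix.mul_assoc]
      _ = D * (Vᵀ * (V * E)) := by rw [Matrix.nonsing_inv_mul_cancel_left _ _ hU]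
      _ = D * E := by rw [hVc]
      _ = 1 := hDE
  have hSinv : IsUnit (D * Vᵀ * U⁻¹).det := Matrix.isUnit_det_of_right_inverse hright
  refine ⟨hSinv, ?_, ?_⟩
  · rw [hPU]
    have hT : (D * Vᵀ * U⁻¹)ᵀ = (Uᵀ)⁻¹ * (V * D) := by
      simp [Matrix.transpose_mul, Matrix.transpose_nonsing_inv, Matrix.mul_assoc, hD]
    rw [hT]
    calc D * Vᵀ * U⁻¹ * (U * Uᵀ) * ((Uᵀ)⁻¹ * (V * D))
        = D * (Vᵀ * (U⁻¹ * (U * (Uᵀ * ((Uᵀ)⁻¹ * (V * D)))))) := by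
          simp [Matrix.mul_assoc]
      _ = D * (Vᵀ * (U⁻¹ * (U * (V * D)))) := by
          rw [Matrix.mul_nonsing_inv_cancel_left _ _ hUT]
      _ = D * (Vᵀ * (V * D)) := by rw [Matrix.nonsing_inv_mul_cancel_left _ _ hU]
      _ = D * D := by rw [hVc]
      _ = Matrix.diagonal d := by
          rw [hD, Matrix.diagonal_mul_diagonal,
            show (fun i => Real.sqrt (d i) * Real.sqrt (d i)) = d from
              funext fun i => Real.mul_self_sqrt (le_of_lt (hd i))]
  · have hinv : (D * Vᵀ * U⁻¹)⁻¹ = U * (V * E) := Matrix.inv_eq_right_inv hright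
    rw [hinv]
    have hT : (U * (V * E))ᵀ = E * (Vᵀ * Uᵀ) := by
      simp [Matrix.transpose_mul, Matrix.mul_assoc, hE]
    rw [hT]
    calc E * (Vᵀ * Uᵀ) * Q * (U * (V * E))
        = E * (Vᵀ * ((Uᵀ * Q * U) * (V * E))) := by simp [Matrix.mul_assoc]
      _ = E * (Vᵀ * (V * ((Matrix.diagonal d) ^ 2 * (Vᵀ * (V * E))))) := by
          rw [hspec]; simp [Matrix.mul_assoc]
      _ = E * ((Matrix.diagonal d) ^ 2 * E) := by rw [hVc, hVc]
      _ = Matrix.diagonal d := by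
          simp only [hE, sq, Matrix.diagonal_mul_diagonal]
          refine (Matrix.diagonal_eq_diagonal_iff).2 fun i => ?_
          have h2 : Real.sqrt (d i) * Real.sqrt (d i) = d i :=
            Real.mul_self_sqrt (le_of_lt (hd i))
          rw [← h2]
          field_simp
          rw [Real.sqrt_sq (Real.sqrt_nonneg _), div_eq_iff (pow_ne_zero _ (hs i))]
          ring
end

section
/- Let D ≥ 2 and suppose the balanced coupled generalized Lyapunov equations Ā_i Λ_i + Λ_i Ā_iᵀ + Σ_{j≠i} K̄_{j,i} Λ_j K̄_{j,i}ᵀ + B̄_i B̄_iᵀ = 0 hold for all modes i, with Λ_i diagonal. Fix truncation orders r_i ≤ n_i and partition Λ_i = diag(Λ̂_i, Λ̌_i), Ā_i = [[Â_i, Ā_i^{12}],[Ā_i^{21}, Ā_i^{22}]], B̄_i = [B̂_i; B̄_i^{2}], K̄_{j,i} = [[K̂_{j,i}, K̄_{j,i}^{12}],[K̄_{j,i}^{21}, K̄_{j,i}^{22}]] with leading blocks of sizes r_i (and r_i × r_j for K̂_{j,i}). Then the truncated blocks satisfy Â_i Λ̂_i + Λ̂_i Â_iᵀ + Σ_{j≠i}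 K̂_{j,i} Λ̂_j K̂_{j,i}ᵀ + Σ_{j≠i} K̄_{j,i}^{12} Λ̌_j (K̄_{j,i}^{12})ᵀ + B̂_i B̂_iᵀ = 0 for every i. In particular, if each Λ̌_j is positive semidefinite, Â_i Λ̂_i + Λ̂_i Â_iᵀ + Σ_{j≠i} K̂_{j,i} Λ̂_j K̂_{j,i}ᵀ + B̂_i B̂_iᵀ ⪯ 0. -/
open Matrix

private lemma split_sum {nj rj : ℕ} (h : rj ≤ nj) (f : Fin nj → ℝ) :
    ∑ k, f k = (∑ k : Fin rj, f (Fin.castLE h k)) +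
      ∑ k : Fin (nj - rj), f (Fin.cast (Nat.add_sub_cancel' h) (Fin.natAdd rj k)) := by
  have e := Fintype.sum_equiv (finCongr (Nat.add_sub_cancel' h))
    (fun k => f (Fin.cast (Nat.add_sub_cancel' h) k)) f (fun k => rfl)
  rw [← e, Fin.sum_univ_add]
  refine congrArg (· + _) (Finset.sum_congr rfl fun k _ => congrArg f ?_)
  ext; simp


/-- truncation of the balanced coupled generalized Lyapunov equations.
If the balanced equations `Ā_i Λ_i + Λ_i Ā_iᵀ + Σ_{j≠i} K̄_{j,i} Λ_j K̄_{j,i}ᵀ + B̄_i B̄_iᵀ = 0`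
hold with `Λ_i = diagonal (d i)`, then after partitioning into leading `r_i` blocks and
tails, the truncated blocks satisfy
`Â_i Λ̂_i + Λ̂_i Â_iᵀ + Σ_{j≠i} K̂_{j,i} Λ̂_j K̂_{j,i}ᵀ + Σ_{j≠i} K̄^{12}_{j,i} Λ̌_j (K̄^{12}_{j,i})ᵀ + B̂_i B̂_iᵀ = 0`,
and if each `Λ̌_j` is positive semidefinite then
`Â_i Λ̂_i + Λ̂_i Â_iᵀ + Σ_{j≠i} K̂_{j,i} Λ̂_j K̂_{j,i}ᵀ + B̂_i B̂_iᵀ ⪯ 0`. -/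
theorem stmt_17 {D m : ℕ} (hD : 2 ≤ D) (n : Fin D → ℕ)
    (A : (i : Fin D) → Matrix (Fin (n i)) (Fin (n i)) ℝ)
    (B : (i : Fin D) → Matrix (Fin (n i)) (Fin m) ℝ)
    (K : (j i : Fin D) → Matrix (Fin (n i)) (Fin (n j)) ℝ)
    (d : (i : Fin D) → Fin (n i) → ℝ)
    (hLyap : ∀ i, A i * Matrix.diagonal (d i) + Matrix.diagonal (d i) * (A i)ᵀ +
        (∑ j ∈ Finset.univ.erase i, K j i * Matrix.diagonal (d j) * (K j i)ᵀ) +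
        B i * (B i)ᵀ = 0)
    (r : Fin D → ℕ) (hr : ∀ i, r i ≤ n i) :
    (∀ i,
      (A i).submatrix (Fin.castLE (hr i)) (Fin.castLE (hr i)) *
          Matrix.diagonal (fun k : Fin (r i) => d i (Fin.castLE (hr i) k)) +
        Matrix.diagonal (fun k : Fin (r i) => d i (Fin.castLE (hr i) k)) *
          ((A i).submatrix (Fin.castLE (hr i)) (Fin.castLE (hr i)))ᵀ +
        (∑ j ∈ Finset.univ.erase i,
          (K j i).submatrix (Fin.castLE (hr i)) (Fin.castLE (hr j)) *
            Matrix.diagonal (fun k : Fin (r j) => d j (Fin.castLE (hr j) k)) *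
            ((K j i).submatrix (Fin.castLE (hr i)) (Fin.castLE (hr j)))ᵀ) +
        (∑ j ∈ Finset.univ.erase i,
          (K j i).submatrix (Fin.castLE (hr i))
              (fun k : Fin (n j - r j) =>
                Fin.cast (Nat.add_sub_cancel' (hr j)) (Fin.natAdd (r j) k)) *
            Matrix.diagonal (fun k : Fin (n j - r j) =>
              d j (Fin.cast (Nat.add_sub_cancel' (hr j)) (Fin.natAdd (r j) k))) *
            ((K j i).submatrix (Fin.castLE (hr i))
              (fun k : Fin (n j - r j) =>
                Fin.cast (Nat.add_sub_cancel' (hr j)) (Fin.natAdd (r j) k)))ᵀ) +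
        (B i).submatrix (Fin.castLE (hr i)) id *
          ((B i).submatrix (Fin.castLE (hr i)) id)ᵀ = 0) ∧
    ((∀ j, (Matrix.diagonal (fun k : Fin (n j - r j) =>
        d j (Fin.cast (Nat.add_sub_cancel' (hr j)) (Fin.natAdd (r j) k)))).PosSemidef) →
      ∀ i,
        (-((A i).submatrix (Fin.castLE (hr i)) (Fin.castLE (hr i)) *
            Matrix.diagonal (fun k : Fin (r i) => d i (Fin.castLE (hr i) k)) +
          Matrix.diagonal (fun k : Fin (r i) => d i (Fin.castLE (hr i) k)) *
            ((A i).submatrix (Fin.castLE (hr i)) (Fin.castLE (hr i)))ᵀ +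
          (∑ j ∈ Finset.univ.erase i,
            (K j i).submatrix (Fin.castLE (hr i)) (Fin.castLE (hr j)) *
              Matrix.diagonal (fun k : Fin (r j) => d j (Fin.castLE (hr j) k)) *
              ((K j i).submatrix (Fin.castLE (hr i)) (Fin.castLE (hr j)))ᵀ) +
          (B i).submatrix (Fin.castLE (hr i)) id *
            ((B i).submatrix (Fin.castLE (hr i)) id)ᵀ)).PosSemidef) := by
  have main : ∀ i,
      (A i).submatrix (Fin.castLE (hr i)) (Fin.castLE (hr i)) *
          Matrix.diagonal (fun k : Fin (r i) => d i (Fin.castLE (hr i) k)) +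
        Matrix.diagonal (fun k : Fin (r i) => d i (Fin.castLE (hr i) k)) *
          ((A i).submatrix (Fin.castLE (hr i)) (Fin.castLE (hr i)))ᵀ +
        (∑ j ∈ Finset.univ.erase i,
          (K j i).submatrix (Fin.castLE (hr i)) (Fin.castLE (hr j)) *
            Matrix.diagonal (fun k : Fin (r j) => d j (Fin.castLE (hr j) k)) *
            ((K j i).submatrix (Fin.castLE (hr i)) (Fin.castLE (hr j)))ᵀ) +
        (∑ j ∈ Finset.univ.erase i,
          (K j i).submatrix (Fin.castLE (hr i))
              (fun k : Fin (n j - r j) =>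
                Fin.cast (Nat.add_sub_cancel' (hr j)) (Fin.natAdd (r j) k)) *
            Matrix.diagonal (fun k : Fin (n j - r j) =>
              d j (Fin.cast (Nat.add_sub_cancel' (hr j)) (Fin.natAdd (r j) k))) *
            ((K j i).submatrix (Fin.castLE (hr i))
              (fun k : Fin (n j - r j) =>
                Fin.cast (Nat.add_sub_cancel' (hr j)) (Fin.natAdd (r j) k)))ᵀ) +
        (B i).submatrix (Fin.castLE (hr i)) id *
          ((B i).submatrix (Fin.castLE (hr i)) id)ᵀ = 0 := by
    intro i
    ext x y
    have hx := congrFun (congrFun (hLyap i) (Fin.castLE (hr i) x)) (Fin.castLE (hr i) y)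
    simp only [Matrix.add_apply, Matrix.zero_apply, Matrix.sum_apply, Matrix.mul_apply,
      Matrix.diagonal_apply, Matrix.transpose_apply, Matrix.submatrix_apply, id,
      mul_ite, mul_zero, ite_mul, zero_mul, Finset.sum_ite_eq, Finset.sum_ite_eq',
      Finset.mem_univ, if_true] at hx ⊢
    rw [← hx]
    rw [show (∑ j ∈ Finset.univ.erase i, ∑ k : Fin (n j),
          K j i (Fin.castLE (hr i) x) k * d j k * K j i (Fin.castLE (hr i) y) k) =
        (∑ j ∈ Finset.univ.erase i, ∑ k : Fin (r j),
          K j i (Fin.castLE (hr i) x) (Fin.castLE (hr j) k) * d j (Fin.castLE (hr j) k) *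
          K j i (Fin.castLE (hr i) y) (Fin.castLE (hr j) k)) +
        (∑ j ∈ Finset.univ.erase i, ∑ k : Fin (n j - r j),
          K j i (Fin.castLE (hr i) x) (Fin.cast (Nat.add_sub_cancel' (hr j)) (Fin.natAdd (r j) k)) *
          d j (Fin.cast (Nat.add_sub_cancel' (hr j)) (Fin.natAdd (r j) k)) *
          K j i (Fin.castLE (hr i) y) (Fin.cast (Nat.add_sub_cancel' (hr j)) (Fin.natAdd (r j) k))) from by
      rw [← Finset.sum_add_distrib]
      exact Finset.sum_congr rfl fun j hj => split_sum (hr j)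
        (fun k => K j i (Fin.castLE (hr i) x) k * d j k * K j i (Fin.castLE (hr i) y) k)]
    ring
  refine ⟨main, fun hpsd i => ?_⟩
  have h2 : -((A i).submatrix (Fin.castLE (hr i)) (Fin.castLE (hr i)) *
            Matrix.diagonal (fun k : Fin (r i) => d i (Fin.castLE (hr i) k)) +
          Matrix.diagonal (fun k : Fin (r i) => d i (Fin.castLE (hr i) k)) *
            ((A i).submatrix (Fin.castLE (hr i)) (Fin.castLE (hr i)))ᵀ +
          (∑ j ∈ Finset.univ.erase i,
            (K j i).submatrix (Fin.castLE (hr i)) (Fin.castLE (hr j)) *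
              Matrix.diagonal (fun k : Fin (r j) => d j (Fin.castLE (hr j) k)) *
              ((K j i).submatrix (Fin.castLE (hr i)) (Fin.castLE (hr j)))ᵀ) +
          (B i).submatrix (Fin.castLE (hr i)) id *
            ((B i).submatrix (Fin.castLE (hr i)) id)ᵀ) =
        ∑ j ∈ Finset.univ.erase i,
          (K j i).submatrix (Fin.castLE (hr i))
              (fun k : Fin (n j - r j) =>
                Fin.cast (Nat.add_sub_cancel' (hr j)) (Fin.natAdd (r j) k)) *
            Matrix.diagonal (fun k : Fin (n j - r j) =>
              d j (Fin.cast (Nat.add_sub_cancel' (hr j)) (Fin.natAdd (r j) k))) *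
            ((K j i).submatrix (Fin.castLE (hr i))
              (fun k : Fin (n j - r j) =>
                Fin.cast (Nat.add_sub_cancel' (hr j)) (Fin.natAdd (r j) k)))ᵀ := by
    refine neg_eq_of_add_eq_zero_left ?_
    rw [← main i]; abel
  rw [h2]
  refine Finset.sum_induction _ _ (fun a b ha hb => ha.add hb) Matrix.PosSemidef.zero
    fun j _ => ?_
  have := (hpsd j).mul_mul_conjTranspose_same ((K j i).submatrix (Fin.castLE (hr i))
      (fun k : Fin (n j - r j) => Fin.cast (Nat.add_sub_cancel' (hr j)) (Fin.natAdd (r j) k)))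
  rwa [conjTranspose_eq_transpose_of_trivial] at this
end
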